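/- Let H ∈ ℝ^{n×n} be symmetric, g ∈ ℝⁿ, M > 0, and let r ∈ ℝ be such that A(r) := H + (Mr/2) I is invertible. Define z(r) := −A(r)⁻¹ g, v_u(z) := ⟨g, z⟩ + (1/2)⟨Hz, z⟩ + (M/6)‖z‖³, and v_l(r) := −(1/2)⟨A(r)⁻¹ g, g⟩ − (M/12) r³. Then the exact identity v_u(z(r)) − v_l(r) = (M/12) (r + 2‖z(r)‖) (‖z(r)‖ − r)² holds. -/

import Mathlib

open scoped BigOperators

/-- Let `H ∈ ℝ^{n×n}` be symmetric, `g ∈ ℝⁿ`, `M > 0`, and let `r ∈ ℝ` be such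
that `A(r) = H + (Mr/2) I` is invertible.  With `z(r) = −A(r)⁻¹ g`,
`v_u(z) = ⟨g,z⟩ + (1/2)⟨Hz,z⟩ + (M/6)‖z‖³` and
`v_l(r) = −(1/2)⟨A(r)⁻¹ g, g⟩ − (M/12) r³`, the exact identity
`v_u(z(r)) − v_l(r) = (M/12)(r + 2‖z(r)‖)(‖z(r)‖ − r)²` holds. -/
theorem statement12 {n : ℕ} (H : Matrix (Fin n) (Fin n) ℝ) (hH : H.IsSymm)
    (g : EuclideanSpace ℝ (Fin n)) (M r : ℝ) (hM : 0 < M)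
    (hinv : IsUnit (H + (M * r / 2) • (1 : Matrix (Fin n) (Fin n) ℝ)).det)
    (z : EuclideanSpace ℝ (Fin n))
    (hz : z = (EuclideanSpace.equiv (Fin n) ℝ).symm
      (-(H + (M * r / 2) • (1 : Matrix (Fin n) (Fin n) ℝ))⁻¹.mulVec (fun j => g j))) :
    ((∑ i, g i * z i) + (1 / 2) * (∑ i, ∑ j, z i * H i j * z j) + (M / 6) * ‖z‖ ^ 3) -
        (-(1 / 2) * (∑ i, ((H + (M * r / 2) • (1 : Matrix (Fin n) (Fin n) ℝ))⁻¹.mulVec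
            (fun j => g j)) i * g i) - (M / 12) * r ^ 3) =
      (M / 12) * (r + 2 * ‖z‖) * (‖z‖ - r) ^ 2 := by
  set A : Matrix (Fin n) (Fin n) ℝ := H + (M * r / 2) • (1 : Matrix (Fin n) (Fin n) ℝ) with hA
  -- coordinates of z
  have hzc : ∀ i, z i = -(A⁻¹.mulVec (fun j => g j)) i := by
    intro i; rw [hz]; rfl
  -- A z = -g
  have hAz : A.mulVec (fun i => z i) = fun i => -g i := by
    have h0 : (fun i => z i) = -(A⁻¹.mulVec (fun j => g j)) := by
      funext i; exact hzc i
    rw [h0, Matrix.mulVec_neg, Matrix.mulVec_mulVec, Matrix.mul_nonsing_inv A hinv,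
      Matrix.one_mulVec]
    rfl
  have hg : ∀ i, g i = -∑ j, A i j * z j := by
    intro i
    have h1 := congrFun hAz i
    simp only [Matrix.mulVec, dotProduct] at h1
    linarith [h1]
  set S2 : ℝ := ∑ i, z i * z i with hS2
  set Q : ℝ := ∑ i, ∑ j, z i * H i j * z j with hQ
  -- expand the A quadratic form
  have hAQ : ∀ i, ∑ j, A i j * z j = (∑ j, H i j * z j) + (M * r / 2) * z i := by
    intro i
    rw [hA]
    simp only [Matrix.add_apply, Matrix.smul_apply, Matrix.one_apply, smul_eq_mul]
    have h1 : ∀ x, (H i x + M * r / 2 * if i = x then (1:ℝ) else 0) * z x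
        = H i x * z x + (if i = x then M * r / 2 * z x else 0) := by
      intro x; split <;> ring
    simp only [h1]
    rw [Finset.sum_add_distrib]
    simp
  have hgz : ∑ i, g i * z i = -(Q + (M * r / 2) * S2) := by
    have h2 : ∀ i, g i * z i = -((∑ j, z i * H i j * z j) + M * r / 2 * (z i * z i)) := by
      intro i
      rw [hg i, hAQ i]
      have h3 : (∑ j, H i j * z j) * z i = ∑ j, z i * H i j * z j := by
        rw [Finset.sum_mul]; exact Finset.sum_congr rfl fun j _ => by ring
      rw [neg_mul, add_mul, h3]
      ring
    simp only [h2]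
    rw [hQ, hS2, Finset.sum_neg_distrib, Finset.sum_add_distrib, ← Finset.mul_sum]
  have hinvg : ∑ i, (A⁻¹.mulVec (fun j => g j)) i * g i = Q + (M * r / 2) * S2 := by
    have h4 : ∀ i, (A⁻¹.mulVec (fun j => g j)) i * g i = -(g i * z i) := by
      intro i
      have := hzc i
      have h5 : (A⁻¹.mulVec (fun j => g j)) i = -z i := by rw [this]; ring
      rw [h5]; ring
    simp only [h4]
    rw [Finset.sum_neg_distrib, hgz]
    ring
  have hnorm : S2 = ‖z‖ ^ 2 := by
    rw [hS2, ← real_inner_self_eq_norm_sq]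
    rw [PiLp.inner_apply]
    simp [RCLike.inner_apply, mul_comm]
    exact Finset.sum_congr rfl fun x _ => (sq _).symm
  rw [hgz, hinvg, hnorm]
  ring
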